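/- The graph G* produced by the Droogendijk construction from a triangle-free graph G is triangle-free. -/

import Mathlib

set_option linter.unreachableTactic false
set_option linter.unusedTactic false
set_option linter.unnecessarySeqFocus false

/-- The set `A` of neighbours of the independent set `S` in `G`. -/
def droogA {V : Type} (G : SimpleGraph V) (S : Set V) : Set V :=
  {v : V | v ∉ S ∧ ∃ w ∈ S, G.Adj v w}

/-- The set `B` of non-neighbours of `S` in `G` (outside `S`). -/
def droogB {V : Type} (G : SimpleGraph V) (S : Set V) : Set V :=
  {v : V | v ∉ S ∧ ∀ w ∈ S, ¬ G.Adj v w}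

/-- Vertex type of the Droogendijk graph `G*`: the original vertices, copies `A'` and `B'`
of `A` and `B`, and the two new vertices `α` (coded `false`) and `β` (coded `true`). -/
abbrev DroogVertex {V : Type} (G : SimpleGraph V) (S : Set V) : Type :=
  V ⊕ ((droogA G S ⊕ droogB G S) ⊕ Bool)

/-- The vertex `α` of `G*`. -/
def droogAlpha {V : Type} (G : SimpleGraph V) (S : Set V) : DroogVertex G S :=
  Sum.inr (Sum.inr false)

/-- The vertex `β` of `G*`. -/
def droogBeta {V : Type} (G : SimpleGraph V) (S : Set V) : DroogVertex G S :=
  Sum.inr (Sum.inr true)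

/-- Adjacency of the Droogendijk graph `G*`: `G` on the original vertices, each copy vertex
joined to the `G`-neighbours of its original, `α` joined to `S ∪ B'`, and `β` joined to
`A' ∪ B'`. -/
def droogAdj {V : Type} (G : SimpleGraph V) (S : Set V) :
    DroogVertex G S → DroogVertex G S → Prop
  | Sum.inl x, Sum.inl y => G.Adj x y
  | Sum.inl x, Sum.inr (Sum.inl (Sum.inl a)) => G.Adj x a.1
  | Sum.inr (Sum.inl (Sum.inl a)), Sum.inl x => G.Adj x a.1
  | Sum.inl x, Sum.inr (Sum.inl (Sum.inr b)) => G.Adj x b.1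
  | Sum.inr (Sum.inl (Sum.inr b)), Sum.inl x => G.Adj x b.1
  | Sum.inl x, Sum.inr (Sum.inr false) => x ∈ S
  | Sum.inr (Sum.inr false), Sum.inl x => x ∈ S
  | Sum.inr (Sum.inl (Sum.inl _)), Sum.inr (Sum.inr true) => True
  | Sum.inr (Sum.inr true), Sum.inr (Sum.inl (Sum.inl _)) => True
  | Sum.inr (Sum.inl (Sum.inr _)), Sum.inr (Sum.inr _) => True
  | Sum.inr (Sum.inr _), Sum.inr (Sum.inl (Sum.inr _)) => True
  | _, _ => False

/-- The Droogendijk graph `G*` built from `G` and the independent set `S`. -/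
def droog {V : Type} (G : SimpleGraph V) (S : Set V) : SimpleGraph (DroogVertex G S) where
  Adj := droogAdj G S
  symm := ⟨by
    rintro (x | ((a | b) | (_ | _))) (y | ((a' | b') | (_ | _))) h <;>
      simp only [droogAdj] at h ⊢ <;> first | exact G.adj_symm h | exact h | trivial⟩
  loopless := ⟨by
    rintro (x | ((a | b) | (_ | _))) h <;> simp only [droogAdj] at h <;>
      first | exact G.irrefl h | exact h | exact h.elim⟩

/-- The Droogendijk graph `G*` produced from a triangle-free graph `G` (with independent
set `S`) is triangle-free. -/
theorem stmt_11 {V : Type} (G : SimpleGraph V) (S : Set V)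
    (hTF : G.CliqueFree 3) (hS : ∀ a ∈ S, ∀ b ∈ S, ¬ G.Adj a b) :
    (droog G S).CliqueFree 3 := by

  classical
  have hTF' : ∀ x y z : V, G.Adj x y → G.Adj x z → G.Adj y z → False := by
    intro x y z h1 h2 h3
    exact hTF {x, y, z} (SimpleGraph.is3Clique_triple_iff.mpr ⟨h1, h2, h3⟩)
  have hS' : ∀ {x y : V}, x ∈ S → y ∈ S → G.Adj x y → False := by
    intro x y hx hy h; exact hS x hx y hy h
  have hBS : ∀ {b : droogB G S} {x : V}, x ∈ S → G.Adj x b → False := by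
    intro b x hx h; exact b.2.2 x hx h.symm
  intro t ht
  rw [SimpleGraph.is3Clique_iff] at ht
  obtain ⟨a, b, c, hab, hac, hbc, -⟩ := ht
  rcases a with x | ((p | q) | (_ | _)) <;>
  rcases b with y | ((r | u) | (_ | _)) <;>
  rcases c with z | ((w | v) | (_ | _)) <;>
  simp only [droog, droogAdj] at hab hac hbc <;>
  first
  | exact hab | exact hac | exact hbc
  | exact hTF' _ _ _ hab hac hbc
  | exact hTF' _ _ _ hac hab hbc
  | exact hTF' _ _ _ hbc hab hac
  | exact hTF' _ _ _ hab hbc hac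
  | exact hTF' _ _ _ hac hbc hab
  | exact hTF' _ _ _ hbc hac hab
  | exact hS' hab hac hbc | exact hS' hab hac hbc.symm
  | exact hS' hac hbc hab | exact hS' hac hbc hab.symm
  | exact hS' hab hbc hac | exact hS' hab hbc hac.symm
  | exact hBS hab hac | exact hBS hac hab
  | exact hBS hab hbc | exact hBS hbc hab
  | exact hBS hac hbc | exact hBS hbc hac
  | exact hBS hab hac.symm | exact hBS hac hab.symm
  | exact hBS hab hbc.symm | exact hBS hbc hab.symm
  | exact hBS hac hbc.symm | exact hBS hbc hac.symm
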